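/- arXiv:2411.13193 — 2 statements merged into one kernel-verified Lean document; each statement's English description precedes it below -/
import Mathlib

section
/- The interval poset of a permutation π of [n] is a tree (its Hasse diagram is a tree) if and only if π has no two intervals I, J with I ⊄ J, J ⊄ I, and I ∩ J ≠ ∅. -/
/-- A set of values in `Fin n` is consecutive if it is closed under betweenness. -/
def Consec {n : ℕ} (S : Finset (Fin n)) : Prop :=
  ∀ ⦃x y z : Fin n⦄, x ∈ S → z ∈ S → x ≤ y → y ≤ z → y ∈ S

/-- `I` is an interval of the permutation `π` if both `I` and its preimage under `π`
are sets of consecutive integers. -/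
def IsInterval {n : ℕ} (π : Equiv.Perm (Fin n)) (I : Finset (Fin n)) : Prop :=
  Consec I ∧ Consec (I.image π.symm)

/-- The 1-based integer interval `[a,b]` viewed inside `Fin n`
(the element `x : Fin n` represents the value `x.val + 1`). -/
def ivl (n a b : ℕ) : Finset (Fin n) :=
  Finset.univ.filter (fun x => a ≤ x.val + 1 ∧ x.val + 1 ≤ b)

/-- J is covered by I in the interval poset of π. -/
def IntervalCover {n : ℕ} (π : Equiv.Perm (Fin n)) (I J : Finset (Fin n)) : Prop :=
  J ⊂ I ∧ ¬ ∃ K : Finset (Fin n), IsInterval π K ∧ K.Nonempty ∧ J ⊂ K ∧ K ⊂ I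

/-- The Hasse diagram of the interval poset of π, as an undirected simple graph on the
nonempty intervals of π, with an edge for each covering relation. -/
def HasseGraph (n : ℕ) (π : Equiv.Perm (Fin n)) :
    SimpleGraph {I : Finset (Fin n) // IsInterval π I ∧ I.Nonempty} where
  Adj x y := IntervalCover π x.1 y.1 ∨ IntervalCover π y.1 x.1
  symm := ⟨fun _ _ h => h.symm⟩
  loopless := ⟨fun x h => by
    rcases h with h | h <;> exact absurd h.1 (ssubset_irrefl _)⟩

/-! ### Auxiliary lemmas -/

lemma consec_inter {n : ℕ} {S T : Finset (Fin n)} (hS : Consec S) (hT : Consec T) :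
    Consec (S ∩ T) := by
  intro x y z hx hz hxy hyz
  simp only [Finset.mem_inter] at *
  exact ⟨hS hx.1 hz.1 hxy hyz, hT hx.2 hz.2 hxy hyz⟩

lemma consec_union {n : ℕ} {S T : Finset (Fin n)} (hS : Consec S) (hT : Consec T)
    (h : (S ∩ T).Nonempty) : Consec (S ∪ T) := by
  obtain ⟨w, hw⟩ := h
  simp only [Finset.mem_inter] at hw
  intro x y z hx hz hxy hyz
  simp only [Finset.mem_union] at *
  rcases hx with hx | hx <;> rcases hz with hz | hz
  · exact Or.inl (hS hx hz hxy hyz)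
  · rcases le_total y w with h' | h'
    · exact Or.inl (hS hx hw.1 hxy h')
    · exact Or.inr (hT hw.2 hz h' hyz)
  · rcases le_total y w with h' | h'
    · exact Or.inr (hT hx hw.2 hxy h')
    · exact Or.inl (hS hw.1 hz h' hyz)
  · exact Or.inr (hT hx hz hxy hyz)

lemma interval_inter {n : ℕ} {π : Equiv.Perm (Fin n)} {I J : Finset (Fin n)}
    (hI : IsInterval π I) (hJ : IsInterval π J) : IsInterval π (I ∩ J) := by
  refine ⟨consec_inter hI.1 hJ.1, ?_⟩
  rw [Finset.image_inter _ _ π.symm.injective]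
  exact consec_inter hI.2 hJ.2

lemma interval_union {n : ℕ} {π : Equiv.Perm (Fin n)} {I J : Finset (Fin n)}
    (hI : IsInterval π I) (hJ : IsInterval π J) (h : (I ∩ J).Nonempty) :
    IsInterval π (I ∪ J) := by
  obtain ⟨w, hw⟩ := h
  simp only [Finset.mem_inter] at hw
  refine ⟨consec_union hI.1 hJ.1 ⟨w, by simp [hw.1, hw.2]⟩, ?_⟩
  rw [Finset.image_union]
  refine consec_union hI.2 hJ.2 ⟨π.symm w, ?_⟩
  simp only [Finset.mem_inter, Finset.mem_image]
  exact ⟨⟨w, hw.1, rfl⟩, ⟨w, hw.2, rfl⟩⟩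

lemma interval_univ {n : ℕ} (π : Equiv.Perm (Fin n)) : IsInterval π Finset.univ := by
  constructor
  · intro x y z _ _ _ _; exact Finset.mem_univ y
  · intro x y z _ _ _ _
    simp [Finset.mem_image]

/-- For nonempty intervals `A ⊊ B`, there is a path in the Hasse graph from `A` to `B`
all of whose vertices lie between `A` and `B`. -/
lemma exists_seg_path {n : ℕ} (π : Equiv.Perm (Fin n)) :
    ∀ (m : ℕ) (A B : {I : Finset (Fin n) // IsInterval π I ∧ I.Nonempty}),
      A.1 ⊆ B.1 → B.1.card - A.1.card ≤ m →
      ∃ p : (HasseGraph n π).Walk A B, p.IsPath ∧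
        ∀ K ∈ p.support, A.1 ⊆ K.1 ∧ K.1 ⊆ B.1 := by
  classical
  intro m
  induction m with
  | zero =>
    intro A B hAB hm
    have : A = B := by
      apply Subtype.ext
      exact Finset.eq_of_subset_of_card_le hAB (by omega)
    subst this
    exact ⟨SimpleGraph.Walk.nil, SimpleGraph.Walk.IsPath.nil, by simp⟩
  | succ m ih =>
    intro A B hAB hm
    by_cases hEq : A = B
    · subst hEq
      exact ⟨SimpleGraph.Walk.nil, SimpleGraph.Walk.IsPath.nil, by simp⟩
    have hAB' : A.1 ⊂ B.1 := by
      refine ⟨hAB, fun h => hEq (Subtype.ext (subset_antisymm hAB h))⟩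
    -- take an interval of maximal cardinality strictly between A and B (inclusive of A)
    set T : Finset (Finset (Fin n)) :=
      Finset.univ.filter (fun K => IsInterval π K ∧ K.Nonempty ∧ A.1 ⊆ K ∧ K ⊂ B.1) with hT
    have hA_T : A.1 ∈ T := by
      simp only [hT, Finset.mem_filter, Finset.mem_univ, true_and]
      exact ⟨A.2.1, A.2.2, subset_rfl, hAB'⟩
    obtain ⟨K₀, hK₀T, hK₀max⟩ := T.exists_max_image (fun K => K.card) ⟨A.1, hA_T⟩
    simp only [hT, Finset.mem_filter, Finset.mem_univ, true_and] at hK₀T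
    obtain ⟨hK₀int, hK₀ne, hAK₀, hK₀B⟩ := hK₀T
    set vK : {I : Finset (Fin n) // IsInterval π I ∧ I.Nonempty} := ⟨K₀, hK₀int, hK₀ne⟩
    have hcov : IntervalCover π B.1 K₀ := by
      refine ⟨hK₀B, ?_⟩
      rintro ⟨L, hLint, hLne, hKL, hLB⟩
      have hLT : L ∈ T := by
        simp only [hT, Finset.mem_filter, Finset.mem_univ, true_and]
        exact ⟨hLint, hLne, hAK₀.trans hKL.subset, hLB⟩
      have := hK₀max L hLT
      have := Finset.card_lt_card hKL
      omega
    have hadj : (HasseGraph n π).Adj vK B := Or.inr hcov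
    have hcardK : K₀.card < B.1.card := Finset.card_lt_card hK₀B
    have hcardA : A.1.card ≤ K₀.card := Finset.card_le_card hAK₀
    obtain ⟨p, hp, hpsup⟩ := ih A vK hAK₀ (show K₀.card - A.1.card ≤ m by omega)
    refine ⟨p.concat hadj, ?_, ?_⟩
    · rw [SimpleGraph.Walk.isPath_def, SimpleGraph.Walk.support_concat, ← List.concat_eq_append]
      refine List.Nodup.concat ?_ hp.support_nodup
      intro hBmem
      have := (hpsup B hBmem).2
      exact absurd (this.antisymm hK₀B.subset) (fun h => hK₀B.ne h.symm)
    · intro K hK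
      rw [SimpleGraph.Walk.support_concat, List.mem_append] at hK
      rcases hK with hK | hK
      · obtain ⟨h1, h2⟩ := hpsup K hK
        exact ⟨h1, h2.trans hK₀B.subset⟩
      · simp only [List.mem_singleton] at hK
        subst hK
        exact ⟨hAB, subset_rfl⟩

/-- the interval poset of a permutation π of [n] is a tree (its Hasse
diagram is a tree) if and only if π has no two non-nested intersecting intervals. -/
theorem tree_iff_no_intersecting (n : ℕ) (hn : 1 ≤ n) (π : Equiv.Perm (Fin n)) :
    (HasseGraph n π).IsTree ↔
      ¬ ∃ I J : Finset (Fin n), IsInterval π I ∧ I.Nonempty ∧ IsInterval π J ∧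
        J.Nonempty ∧ ¬ I ⊆ J ∧ ¬ J ⊆ I ∧ (I ∩ J).Nonempty := by
  classical
  constructor
  · -- tree → no crossing intervals
    rintro htree ⟨I, J, hI, hIne, hJ, hJne, hIJ, hJI, hint⟩
    set A : {K : Finset (Fin n) // IsInterval π K ∧ K.Nonempty} :=
      ⟨I ∩ J, interval_inter hI hJ, hint⟩
    set D : {K : Finset (Fin n) // IsInterval π K ∧ K.Nonempty} :=
      ⟨I ∪ J, interval_union hI hJ hint, hIne.mono Finset.subset_union_left⟩
    set vI : {K : Finset (Fin n) // IsInterval π K ∧ K.Nonempty} := ⟨I, hI, hIne⟩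
    set vJ : {K : Finset (Fin n) // IsInterval π K ∧ K.Nonempty} := ⟨J, hJ, hJne⟩
    have key : ∀ (X : {K : Finset (Fin n) // IsInterval π K ∧ K.Nonempty}),
        A.1 ⊆ X.1 → X.1 ⊆ D.1 →
        ∃ q : (HasseGraph n π).Walk A D, q.IsPath ∧ X ∈ q.support ∧
          ∀ K ∈ q.support, K.1 ⊆ X.1 ∨ X.1 ⊆ K.1 := by
      intro X hAX hXD
      obtain ⟨p1, hp1, hp1s⟩ := exists_seg_path π (X.1.card - A.1.card) A X hAX le_rfl
      obtain ⟨p2, hp2, hp2s⟩ := exists_seg_path π (D.1.card - X.1.card) X D hXD le_rfl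
      refine ⟨p1.append p2, ?_, ?_, ?_⟩
      · rw [SimpleGraph.Walk.isPath_def, SimpleGraph.Walk.support_append]
        refine List.Nodup.append hp1.support_nodup ?_ ?_
        · have := hp2.support_nodup
          rw [SimpleGraph.Walk.support_eq_cons] at this
          exact (List.nodup_cons.1 this).2
        · intro t ht1 ht2
          have htp2 : t ∈ p2.support := by
            rw [SimpleGraph.Walk.support_eq_cons]
            exact List.mem_cons_of_mem _ ht2
          have h1 := (hp1s t ht1).2
          have h2 := (hp2s t htp2).1
          have : t = X := Subtype.ext (h1.antisymm h2)
          subst this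
          have := hp2.support_nodup
          rw [SimpleGraph.Walk.support_eq_cons] at this
          exact absurd ht2 (List.nodup_cons.1 this).1
      · exact SimpleGraph.Walk.subset_support_append_left p1 p2 p1.end_mem_support
      · intro K hK
        rw [SimpleGraph.Walk.mem_support_append_iff] at hK
        rcases hK with hK | hK
        · exact Or.inl (hp1s K hK).2
        · exact Or.inr (hp2s K hK).1
    obtain ⟨q1, hq1, hIq1, _⟩ := key vI Finset.inter_subset_left Finset.subset_union_left
    obtain ⟨q2, hq2, _, hq2s⟩ := key vJ Finset.inter_subset_right Finset.subset_union_right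
    have hne : q1 ≠ q2 := by
      intro h
      subst h
      rcases hq2s vI hIq1 with h | h
      · exact hIJ h
      · exact hJI h
    have := htree.2.path_unique ⟨q1, hq1⟩ ⟨q2, hq2⟩
    exact hne (congrArg Subtype.val this)
  · -- no crossing intervals → tree
    intro hnc
    have hlam : ∀ X Y : Finset (Fin n), IsInterval π X → X.Nonempty → IsInterval π Y →
        Y.Nonempty → (X ∩ Y).Nonempty → X ⊆ Y ∨ Y ⊆ X := by
      intro X Y hX hXne hY hYne hi
      by_contra h
      push_neg at h
      exact hnc ⟨X, Y, hX, hXne, hY, hYne, h.1, h.2, hi⟩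
    have hfin : Nonempty (Fin n) := ⟨⟨0, by omega⟩⟩
    set root : {K : Finset (Fin n) // IsInterval π K ∧ K.Nonempty} :=
      ⟨Finset.univ, interval_univ π, Finset.univ_nonempty⟩
    constructor
    · -- connected
      have reach : ∀ (m : ℕ) (v : {K : Finset (Fin n) // IsInterval π K ∧ K.Nonempty}),
          n - v.1.card ≤ m → (HasseGraph n π).Reachable v root := by
        intro m
        induction m with
        | zero =>
          intro v hv
          have hle : v.1.card ≤ n := by
            simpa using Finset.card_le_card (Finset.subset_univ v.1)
          have : v.1 = Finset.univ := Finset.eq_univ_of_card _ (by simp; omega)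
          exact ((Subtype.ext this : v = root) ▸ SimpleGraph.Reachable.refl _)
        | succ m ih =>
          intro v hv
          by_cases hEq : v.1 = Finset.univ
          · exact ((Subtype.ext hEq : v = root) ▸ SimpleGraph.Reachable.refl _)
          have hvss : v.1 ⊂ Finset.univ := Finset.ssubset_univ_iff.2 hEq
          set T : Finset (Finset (Fin n)) :=
            Finset.univ.filter (fun K => IsInterval π K ∧ K.Nonempty ∧ v.1 ⊂ K) with hT
          have hU_T : Finset.univ ∈ T := by
            simp only [hT, Finset.mem_filter, Finset.mem_univ, true_and]
            exact ⟨interval_univ π, Finset.univ_nonempty, hvss⟩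
          obtain ⟨K₀, hK₀T, hK₀min⟩ := T.exists_min_image (fun K => K.card) ⟨_, hU_T⟩
          simp only [hT, Finset.mem_filter, Finset.mem_univ, true_and] at hK₀T
          obtain ⟨hK₀int, hK₀ne, hvK₀⟩ := hK₀T
          have hcov : IntervalCover π K₀ v.1 := by
            refine ⟨hvK₀, ?_⟩
            rintro ⟨L, hLint, hLne, hvL, hLK⟩
            have hLT : L ∈ T := by
              simp only [hT, Finset.mem_filter, Finset.mem_univ, true_and]
              exact ⟨hLint, hLne, hvL⟩
            have := hK₀min L hLT
            have := Finset.card_lt_card hLK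
            omega
          set vK : {K : Finset (Fin n) // IsInterval π K ∧ K.Nonempty} := ⟨K₀, hK₀int, hK₀ne⟩
          have hadj : (HasseGraph n π).Adj v vK := Or.inr hcov
          have h1 : v.1.card < K₀.card := Finset.card_lt_card hvK₀
          have h2 : K₀.card ≤ n := by
            simpa using Finset.card_le_card (Finset.subset_univ K₀)
          exact hadj.reachable.trans (ih vK (show n - K₀.card ≤ m by omega))
      rw [SimpleGraph.connected_iff]
      exact ⟨fun v w => (reach n v (by omega)).trans (reach n w (by omega)).symm, ⟨root⟩⟩
    · -- acyclic
      intro v c hc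
      obtain ⟨u, hu, humin⟩ := c.support.toFinset.exists_min_image
        (fun K => K.1.card) ⟨v, by simp⟩
      rw [List.mem_toFinset] at hu
      have hc' : (c.rotate u hu).IsCycle := hc.rotate hu
      obtain ⟨x, hadjx, q, hq⟩ := SimpleGraph.Walk.not_nil_iff.1 hc'.not_nil
      rw [hq] at hc'
      obtain ⟨hqpath, hqedge⟩ := (SimpleGraph.Walk.cons_isCycle_iff _ _).1 hc'
      have hqlen : 0 < q.length := by
        have := hc'.three_le_length
        simp only [SimpleGraph.Walk.length_cons] at this
        omega
      have hqnn : ¬ q.Nil := SimpleGraph.Walk.not_nil_iff_lt_length.2 hqlen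
      have hqrnn : ¬ q.reverse.Nil := by
        rw [SimpleGraph.Walk.not_nil_iff_lt_length]
        simpa using hqlen
      obtain ⟨y, hadjy, r, hr⟩ := SimpleGraph.Walk.not_nil_iff.1 hqrnn
      -- x ≠ y
      have hxy : x ≠ y := by
        intro h
        subst h
        apply hqedge
        have : s(u, x) ∈ q.reverse.edges := by
          rw [hr]; simp
        rwa [SimpleGraph.Walk.edges_reverse, List.mem_reverse] at this
      -- memberships in c.support
      have hmem : ∀ t : {K : Finset (Fin n) // IsInterval π K ∧ K.Nonempty},
          t ∈ q.support → t ∈ c.support := by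
        intro t ht
        have h1 : t ∈ (c.rotate u hu).support.tail := by
          rw [hq]; simpa using ht
        have h2 : t ∈ c.support.tail :=
          (SimpleGraph.Walk.support_rotate c u hu).mem_iff.1 h1
        exact List.mem_of_mem_tail h2
      have hxmem : x ∈ c.support := hmem x q.start_mem_support
      have hymem : y ∈ c.support := by
        apply hmem
        have : y ∈ q.reverse.support := by
          rw [hr]
          exact List.mem_cons_of_mem _ r.start_mem_support
        rwa [SimpleGraph.Walk.support_reverse, List.mem_reverse] at this
      -- both adjacencies must point upward from u
      have hup : ∀ t : {K : Finset (Fin n) // IsInterval π K ∧ K.Nonempty},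
          t ∈ c.support → (HasseGraph n π).Adj u t → IntervalCover π t.1 u.1 := by
        intro t htmem hadj
        rcases hadj with h | h
        · exfalso
          have := Finset.card_lt_card h.1
          have := humin t (List.mem_toFinset.2 htmem)
          omega
        · exact h
      have hcx := hup x hxmem hadjx
      have hcy := hup y hymem hadjy
      -- x and y both strictly contain u, hence nested, hence equal by cover property
      have hinter : (x.1 ∩ y.1).Nonempty := by
        obtain ⟨a, ha⟩ := u.2.2
        exact ⟨a, Finset.mem_inter.2 ⟨hcx.1.subset ha, hcy.1.subset ha⟩⟩
      rcases hlam x.1 y.1 x.2.1 x.2.2 y.2.1 y.2.2 hinter with h | h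
      · rcases eq_or_lt_of_le h with h' | h'
        · exact hxy (Subtype.ext h')
        · exact hcy.2 ⟨x.1, x.2.1, x.2.2, hcx.1, h'⟩
      · rcases eq_or_lt_of_le h with h' | h'
        · exact hxy (Subtype.ext h'.symm)
        · exact hcx.2 ⟨y.1, y.2.1, y.2.2, hcy.1, h'⟩
end

section
/- An interval poset of a block-wise simple permutation is a tree. That is, if π is block-wise simple, then the Hasse diagram of its interval poset P(π) is a tree. -/
/-- π is block-wise simple: no interval of π is the disjoint union of two nonempty
intervals of π. -/
def BlockwiseSimple {n : ℕ} (π : Equiv.Perm (Fin n)) : Prop :=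
  ¬ ∃ I K : Finset (Fin n), IsInterval π I ∧ IsInterval π K ∧ IsInterval π (K \ I) ∧
    I.Nonempty ∧ (K \ I).Nonempty ∧ I ⊂ K

section Aux
variable {n : ℕ} {π : Equiv.Perm (Fin n)}

lemma consec_union_s17 {A B : Finset (Fin n)} (hA : Consec A) (hB : Consec B)
    {w : Fin n} (hwA : w ∈ A) (hwB : w ∈ B) : Consec (A ∪ B) := by
  intro x y z hx hz hxy hyz
  rw [Finset.mem_union] at hx hz ⊢
  rcases hx with hx | hx <;> rcases hz with hz | hz
  · exact Or.inl (hA hx hz hxy hyz)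
  · rcases le_total y w with h | h
    · exact Or.inl (hA hx hwA hxy h)
    · exact Or.inr (hB hwB hz h hyz)
  · rcases le_total y w with h | h
    · exact Or.inr (hB hx hwB hxy h)
    · exact Or.inl (hA hwA hz h hyz)
  · exact Or.inr (hB hx hz hxy hyz)

lemma consec_sdiff {A B : Finset (Fin n)} (hA : Consec A) (hB : Consec B)
    {b : Fin n} (hbB : b ∈ B) (hbA : b ∉ A) : Consec (A \ B) := by
  intro x y z hx hz hxy hyz
  rw [Finset.mem_sdiff] at hx hz ⊢
  refine ⟨hA hx.1 hz.1 hxy hyz, fun hyB => ?_⟩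
  rcases le_total b y with h | h
  · rcases le_total b x with h' | h'
    · exact hx.2 (hB hbB hyB h' hxy)
    · exact hbA (hA hx.1 hz.1 h' (le_trans h hyz))
  · rcases le_total b z with h' | h'
    · exact hbA (hA hx.1 hz.1 (le_trans hxy h) h')
    · exact hz.2 (hB hyB hbB hyz h')

lemma isInterval_univ : IsInterval π (Finset.univ : Finset (Fin n)) := by
  constructor
  · intro x y z _ _ _ _; exact Finset.mem_univ y
  · intro x y z _ _ _ _
    exact Finset.mem_image.2 ⟨π y, Finset.mem_univ _, Equiv.symm_apply_apply π y⟩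

lemma isInterval_union {A B : Finset (Fin n)} (hA : IsInterval π A) (hB : IsInterval π B)
    {w : Fin n} (hwA : w ∈ A) (hwB : w ∈ B) : IsInterval π (A ∪ B) := by
  refine ⟨consec_union_s17 hA.1 hB.1 hwA hwB, ?_⟩
  rw [Finset.image_union]
  exact consec_union_s17 hA.2 hB.2 (Finset.mem_image_of_mem _ hwA) (Finset.mem_image_of_mem _ hwB)

lemma isInterval_sdiff {A B : Finset (Fin n)} (hA : IsInterval π A) (hB : IsInterval π B)
    {b : Fin n} (hbB : b ∈ B) (hbA : b ∉ A) : IsInterval π (A \ B) := by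
  refine ⟨consec_sdiff hA.1 hB.1 hbB hbA, ?_⟩
  rw [Finset.image_sdiff _ _ π.symm.injective]
  refine consec_sdiff hA.2 hB.2 (Finset.mem_image_of_mem _ hbB) (fun hmem => ?_)
  obtain ⟨a, haA, ha⟩ := Finset.mem_image.1 hmem
  exact hbA (π.symm.injective ha ▸ haA)

lemma laminar (h : BlockwiseSimple π) {A B : Finset (Fin n)}
    (hA : IsInterval π A) (hB : IsInterval π B) (hw : (A ∩ B).Nonempty) :
    A ⊆ B ∨ B ⊆ A := by
  by_contra hc
  push_neg at hc
  obtain ⟨a, haA, haB⟩ := Finset.not_subset.1 hc.1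
  obtain ⟨b, hbB, hbA⟩ := Finset.not_subset.1 hc.2
  obtain ⟨w, hw'⟩ := hw
  rw [Finset.mem_inter] at hw'
  refine h ⟨A, A ∪ B, hA, isInterval_union hA hB hw'.1 hw'.2, ?_, ⟨a, haA⟩, ?_, ?_⟩
  · rw [Finset.union_sdiff_left]
    exact isInterval_sdiff hB hA haA haB
  · rw [Finset.union_sdiff_left]
    exact ⟨b, Finset.mem_sdiff.2 ⟨hbB, hbA⟩⟩
  · exact Finset.ssubset_iff_of_subset Finset.subset_union_left |>.2
      ⟨b, Finset.mem_union_right _ hbB, hbA⟩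

lemma parent_unique (h : BlockwiseSimple π) {J I₁ I₂ : Finset (Fin n)}
    (hJ : J.Nonempty) (h1 : IsInterval π I₁) (h2 : IsInterval π I₂)
    (h1ne : I₁.Nonempty) (h2ne : I₂.Nonempty)
    (c1 : IntervalCover π I₁ J) (c2 : IntervalCover π I₂ J) : I₁ = I₂ := by
  have hsub : I₁ ⊆ I₂ ∨ I₂ ⊆ I₁ := by
    refine laminar h h1 h2 ?_
    obtain ⟨j, hj⟩ := hJ
    exact ⟨j, Finset.mem_inter.2 ⟨c1.1.1 hj, c2.1.1 hj⟩⟩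
  rcases hsub with hs | hs
  · rcases eq_or_ne I₁ I₂ with he | he
    · exact he
    · exact absurd ⟨I₁, h1, h1ne, c1.1, hs.ssubset_of_ne he⟩ c2.2
  · rcases eq_or_ne I₁ I₂ with he | he
    · exact he
    · exact absurd ⟨I₂, h2, h2ne, c2.1, hs.ssubset_of_ne (Ne.symm he)⟩ c1.2

lemma parent_exists {J : Finset (Fin n)} (hJuniv : J ≠ Finset.univ) :
    ∃ I, IsInterval π I ∧ IntervalCover π I J := by
  classical
  let T : Finset (Finset (Fin n)) :=
    (Finset.univ : Finset (Fin n)).powerset.filter (fun K => IsInterval π K ∧ J ⊂ K)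
  have hTne : T.Nonempty :=
    ⟨Finset.univ, Finset.mem_filter.2 ⟨Finset.mem_powerset_self _, isInterval_univ,
      (Finset.subset_univ J).ssubset_of_ne hJuniv⟩⟩
  obtain ⟨I, hIT, hmin⟩ := T.exists_min_image (fun K => K.card) hTne
  obtain ⟨-, hIint, hJI⟩ := Finset.mem_filter.1 hIT
  refine ⟨I, hIint, hJI, fun ⟨K, hKint, hKne, hJK, hKI⟩ => ?_⟩
  have : K ∈ T := Finset.mem_filter.2 ⟨Finset.mem_powerset.2 (Finset.subset_univ K), hKint, hJK⟩
  exact absurd (hmin K this) (not_le.2 (Finset.card_lt_card hKI))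

end Aux

/-- the interval poset of a block-wise simple permutation is a tree. -/
theorem blockwise_simple_tree (n : ℕ) (hn : 1 ≤ n) (π : Equiv.Perm (Fin n))
    (h : BlockwiseSimple π) : (HasseGraph n π).IsTree := by
  classical
  have hne : Nonempty (Fin n) := ⟨⟨0, hn⟩⟩
  set G := HasseGraph n π with hG
  let top : {I : Finset (Fin n) // IsInterval π I ∧ I.Nonempty} :=
    ⟨Finset.univ, isInterval_univ, Finset.univ_nonempty⟩
  have hcmp : ∀ x y, G.Adj x y → x.1 ⊂ y.1 ∨ y.1 ⊂ x.1 := fun x y ha =>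
    ha.elim (fun hc => Or.inr hc.1) (fun hc => Or.inl hc.1)
  have hcov : ∀ x y, G.Adj x y → x.1 ⊂ y.1 → IntervalCover π y.1 x.1 := by
    intro x y ha hss
    rcases ha with hc | hc
    · exact absurd (hss.trans hc.1) (ssubset_irrefl _)
    · exact hc
  -- connectivity
  have key : ∀ (k : ℕ) v, n - v.1.card ≤ k → G.Reachable v top := by
    intro k
    induction k with
    | zero =>
      intro v hv
      have hle : v.1.card ≤ n := by
        simpa using Finset.card_le_univ v.1
      have : v.1 = Finset.univ := Finset.eq_univ_of_card v.1 (by simp; omega)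
      have hv' : v = top := Subtype.ext this
      rw [hv']
    | succ k ih =>
      intro v hv
      by_cases hvu : v.1 = Finset.univ
      · have hv' : v = top := Subtype.ext hvu
        rw [hv']
      · obtain ⟨I, hIint, hcovI⟩ := parent_exists (π := π) hvu
        have hIne : I.Nonempty := v.2.2.mono hcovI.1.subset
        have hIle : I.card ≤ n := by simpa using Finset.card_le_univ I
        have hlt : v.1.card < I.card := Finset.card_lt_card hcovI.1
        have hadj : G.Adj ⟨I, hIint, hIne⟩ v := Or.inl hcovI
        exact (hadj.symm.reachable).trans (ih ⟨I, hIint, hIne⟩ (show n - I.card ≤ k by omega))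
  have hconn : G.Connected := by
    rw [SimpleGraph.connected_iff]
    exact ⟨fun u v => (key _ u le_rfl).trans (key _ v le_rfl).symm, ⟨top⟩⟩
  -- acyclicity
  refine ⟨hconn, fun v c hc => ?_⟩
  have hs : c.support.toFinset.Nonempty := ⟨v, List.mem_toFinset.2 c.start_mem_support⟩
  obtain ⟨u, huS, humin⟩ := c.support.toFinset.exists_min_image (fun x => x.1.card) hs
  have hu : u ∈ c.support := List.mem_toFinset.1 huS
  have memtail : ∀ x, x ∈ (c.rotate u hu).support.tail → x ∈ c.support := by
    intro x hx
    have hx' : x ∈ c.support.tail := (SimpleGraph.Walk.support_rotate c u hu).mem_iff.1 hx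
    rw [c.support_eq_cons]
    exact List.mem_cons_of_mem _ hx'
  have hc' : (c.rotate u hu).IsCycle := hc.rotate hu
  obtain ⟨b, hub, p, hp⟩ := SimpleGraph.Walk.not_nil_iff.1 hc'.not_nil
  rw [hp] at hc' memtail
  have hpath := (SimpleGraph.Walk.cons_isCycle_iff p hub).1 hc'
  obtain ⟨w₂, huw₂, q, hq⟩ := SimpleGraph.Walk.exists_eq_cons_of_ne hub.ne p.reverse
  have hedge : s(u, w₂) ∈ p.edges := by
    have : s(u, w₂) ∈ p.reverse.edges := by
      rw [hq, SimpleGraph.Walk.edges_cons]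
      exact List.mem_cons_self
    rwa [SimpleGraph.Walk.edges_reverse, List.mem_reverse] at this
  have hw₂b : w₂ ≠ b := fun he => hpath.2 (he ▸ hedge)
  have hbmem : b ∈ c.support := by
    refine memtail b ?_
    rw [SimpleGraph.Walk.support_cons]
    exact p.start_mem_support
  have hw₂mem : w₂ ∈ c.support := by
    refine memtail w₂ ?_
    rw [SimpleGraph.Walk.support_cons]
    have : w₂ ∈ p.reverse.support := by
      rw [hq, SimpleGraph.Walk.support_cons]
      exact List.mem_cons_of_mem _ q.start_mem_support
    rwa [SimpleGraph.Walk.support_reverse, List.mem_reverse] at this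
  have h1 : u.1.card ≤ b.1.card := humin b (List.mem_toFinset.2 hbmem)
  have h2 : u.1.card ≤ w₂.1.card := humin w₂ (List.mem_toFinset.2 hw₂mem)
  have hub' : u.1 ⊂ b.1 := by
    rcases hcmp u b hub with hss | hss
    · exact hss
    · exact absurd (Finset.card_lt_card hss) (not_lt.2 h1)
  have huw₂' : u.1 ⊂ w₂.1 := by
    rcases hcmp u w₂ huw₂ with hss | hss
    · exact hss
    · exact absurd (Finset.card_lt_card hss) (not_lt.2 h2)
  have hcb := hcov u b hub hub'
  have hcw := hcov u w₂ huw₂ huw₂'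
  exact hw₂b (Subtype.ext (parent_unique h u.2.2 w₂.2.1 b.2.1 w₂.2.2 b.2.2 hcw hcb))
end
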